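/- Define, for real x > 0 and y > 0, R₁(x,y) = (9x²y² + y⁴)/(24x²y²) and R₂(x,y) = (−12x²y² − 2xy³)/(24x²y²). Then for real numbers t₁, t₂ there exist c > 0, x > 0 and y > 0 with R₁(x,y) = c·t₁ and R₂(x,y) = c·t₂ if and only if t₁ > 0 and (−2 − √5)/3 ≤ t₂/t₁ < 0. -/

import Mathlib

theorem stmt_15 (t₁ t₂ : ℝ) :
    (∃ c x y : ℝ, 0 < c ∧ 0 < x ∧ 0 < y ∧
        (9*x^2*y^2 + y^4)/(24*x^2*y^2) = c * t₁ ∧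
        (-12*x^2*y^2 - 2*x*y^3)/(24*x^2*y^2) = c * t₂) ↔
      (0 < t₁ ∧ (-2 - Real.sqrt 5)/3 ≤ t₂/t₁ ∧ t₂/t₁ < 0) := by
  have hs0 : (0:ℝ) ≤ Real.sqrt 5 := Real.sqrt_nonneg 5
  have hs : (Real.sqrt 5)^2 = 5 := Real.sq_sqrt (by norm_num)
  have hs2 : (2:ℝ) < Real.sqrt 5 := by nlinarith
  set s := Real.sqrt 5 with hsdef
  constructor
  · rintro ⟨c, x, y, hc, hx, hy, h1, h2⟩
    have hden : (0:ℝ) < 24*x^2*y^2 := by positivity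
    rw [div_eq_iff (ne_of_gt hden)] at h1 h2
    have ht1 : 0 < t₁ := by nlinarith [sq_nonneg x, sq_nonneg y, mul_pos hc hden]
    have ht2 : t₂ < 0 := by nlinarith [mul_pos hc hden, mul_pos (mul_pos hx hy) (mul_pos hy hy)]
    refine ⟨ht1, ?_, div_neg_of_neg_of_pos ht2 ht1⟩
    rw [div_le_div_iff₀ (by norm_num) ht1]
    have heq : c * (24*x^2*y^2) * ((2+s)*t₁ + 3*t₂)
        = (2+s) * (y^2 * (y - (3*s-6)*x)^2) := by
      linear_combination (-(2+s))*h1 - 3*h2 + (6*x*y^3 + (18-9*s)*x^2*y^2) * hs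
    have hrhs : 0 ≤ (2+s) * (y^2 * (y - (3*s-6)*x)^2) :=
      mul_nonneg (by linarith) (by positivity)
    have hpos : 0 < c * (24*x^2*y^2) := mul_pos hc hden
    nlinarith [heq, hrhs, hpos]
  · rintro ⟨ht1, hlow, hneg⟩
    set r := t₂/t₁ with hrdef
    have hr : r < 0 := hneg
    have ht2 : t₂ = r * t₁ := by rw [hrdef, div_mul_cancel₀ _ (ne_of_gt ht1)]
    have hD : 0 ≤ 1 - 12*r - 9*r^2 := by
      nlinarith [mul_nonneg (by linarith : (0:ℝ) ≤ r - (-2-s)/3)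
        (by nlinarith : (0:ℝ) ≤ (-2+s)/3 - r)]
    set d := Real.sqrt (1 - 12*r - 9*r^2) with hddef
    have hd0 : 0 ≤ d := Real.sqrt_nonneg _
    have hd : d^2 = 1 - 12*r - 9*r^2 := Real.sq_sqrt hD
    set u := (-1 - d)/r with hudef
    have hu : 0 < u := div_pos_of_neg_of_neg (by linarith) hr
    have hur : u * r = -1 - d := by rw [hudef, div_mul_cancel₀ _ (ne_of_lt hr)]
    have h0 : r * (r*u^2 + 2*u + 9*r + 12) = 0 := by
      linear_combination (u*r + (-1 - d) + 2) * hur + hd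
    have hquad : r*u^2 + 2*u + 9*r + 12 = 0 := by
      rcases mul_eq_zero.mp h0 with h | h
      · exact absurd h (ne_of_lt hr)
      · exact h
    refine ⟨(9 + u^2)/(24*t₁), 1, u, div_pos (by positivity) (by linarith), one_pos, hu, ?_, ?_⟩
    · field_simp
    · rw [ht2]
      clear_value u d r s
      field_simp
      linear_combination (-1:ℝ) * hquad
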